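/- Let $n \ge 3$ and $\Phi(x) = \frac{1}{n(n-2)\omega_n} |x|^{2-n}$ be the fundamental solution of the Laplacian, where $\omega_n$ is the volume of the unit ball. If $\vec{d} \in \mathbb{R}^n$ is nonzero, then $\|(\vec{d} \cdot \nabla \Phi)^-\|_{L^{n/(n-1)}(B_{1/2})} = +\infty$. -/

import Mathlib

open MeasureTheory Metric Real Set
open scoped RealInnerProductSpace ENNReal Pointwise

set_option maxHeartbeats 1000000 in
theorem grad_fundamental_solution_neg_part_not_Lp
    (n : ℕ) (hn : 3 ≤ n)
    (ωn : ℝ) (hω : ωn = (volume (ball (0 : EuclideanSpace ℝ (Fin n)) 1)).toReal)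
    (d : EuclideanSpace ℝ (Fin n)) (hd : d ≠ 0) :
    ∫⁻ x in ball (0 : EuclideanSpace ℝ (Fin n)) (1/2),
        ENNReal.ofReal
          ((max (-(-(1 / ((n:ℝ) * ωn)) * ‖x‖ ^ (-(n:ℝ)) * ⟪d, x⟫)) 0)
            ^ ((n:ℝ) / ((n:ℝ) - 1))) = ⊤ := by
  set f : EuclideanSpace ℝ (Fin n) → ℝ≥0∞ := fun x => ENNReal.ofReal
      ((max (-(-(1 / ((n:ℝ) * ωn)) * ‖x‖ ^ (-(n:ℝ)) * ⟪d, x⟫)) 0)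
        ^ ((n:ℝ) / ((n:ℝ) - 1))) with hf
  have hn1 : (1:ℝ) < (n:ℝ) := by exact_mod_cast lt_of_lt_of_le (by norm_num) hn
  have hωpos : 0 < ωn := by
    rw [hω]
    exact ENNReal.toReal_pos (measure_ball_pos volume _ one_pos).ne'
      (measure_ball_lt_top).ne
  have hnω : 0 < (n:ℝ) * ωn := by positivity
  have hdpos : 0 < ‖d‖ := norm_pos_iff.mpr hd
  set c : ℝ := ‖d‖ / (4 * ((n:ℝ) * ωn)) with hc
  have hcpos : 0 < c := by positivity
  set p : ℝ := (n:ℝ) / ((n:ℝ) - 1) with hp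
  have hppos : 0 < p := div_pos (by linarith) (by linarith)
  -- the cone-annulus set
  set S : Set (EuclideanSpace ℝ (Fin n)) :=
    {x | ‖d‖ * ‖x‖ / 2 < ⟪d, x⟫ ∧ 1/2 < ‖x‖ ∧ ‖x‖ < 1} with hS
  have hSopen : IsOpen S := by
    have h1 : IsOpen {x : EuclideanSpace ℝ (Fin n) | ‖d‖ * ‖x‖ / 2 < ⟪d, x⟫} :=
      isOpen_lt (by continuity) (continuous_const.inner continuous_id)
    have h2 : IsOpen {x : EuclideanSpace ℝ (Fin n) | 1/2 < ‖x‖} :=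
      isOpen_lt continuous_const continuous_norm
    have h3 : IsOpen {x : EuclideanSpace ℝ (Fin n) | ‖x‖ < 1} :=
      isOpen_lt continuous_norm continuous_const
    exact (h1.inter (h2.inter h3))
  have hSne : S.Nonempty := by
    have hnorm : ‖(3/(4*‖d‖):ℝ) • d‖ = 3/4 := by
      rw [norm_smul, Real.norm_eq_abs, abs_of_pos (by positivity)]
      field_simp
    have hinner : ⟪d, (3/(4*‖d‖):ℝ) • d⟫ = (3/4)*‖d‖ := by
      rw [real_inner_smul_right, real_inner_self_eq_norm_sq]
      field_simp
    refine ⟨(3/(4*‖d‖):ℝ) • d, ?_, ?_, ?_⟩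
    · show ‖d‖ * ‖_‖ / 2 < _
      rw [hnorm, hinner]; nlinarith
    · show (1:ℝ)/2 < ‖_‖
      rw [hnorm]; norm_num
    · show ‖_‖ < (1:ℝ)
      rw [hnorm]; norm_num
  have hSpos : 0 < volume S := hSopen.measure_pos volume hSne
  set r : ℕ → ℝ := fun k => (1/2 : ℝ) ^ (k + 1) with hr
  have hrpos : ∀ k, 0 < r k := fun k => by positivity
  set T : ℕ → Set (EuclideanSpace ℝ (Fin n)) := fun k => r k • S with hT
  have hTmeas : ∀ k, MeasurableSet (T k) :=
    fun k => (hSopen.smul₀ (hrpos k).ne').measurableSet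
  have hTnorm : ∀ k, ∀ x ∈ T k, (1/2:ℝ)^(k+2) < ‖x‖ ∧ ‖x‖ < (1/2:ℝ)^(k+1) := by
    intro k x hx
    obtain ⟨y, hy, rfl⟩ := hx
    rw [norm_smul, Real.norm_eq_abs, abs_of_pos (hrpos k)]
    constructor
    · calc (1/2:ℝ)^(k+2) = r k * (1/2) := by rw [hr]; ring
        _ < r k * ‖y‖ := mul_lt_mul_of_pos_left hy.2.1 (hrpos k)
    · calc r k * ‖y‖ < r k * 1 := mul_lt_mul_of_pos_left hy.2.2 (hrpos k)
        _ = (1/2:ℝ)^(k+1) := by rw [hr]; ring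
  have hTsub : ∀ k, T k ⊆ ball (0:EuclideanSpace ℝ (Fin n)) (1/2) := by
    intro k x hx
    rw [mem_ball_zero_iff]
    calc ‖x‖ < (1/2:ℝ)^(k+1) := (hTnorm k x hx).2
      _ ≤ (1/2:ℝ)^1 := pow_le_pow_of_le_one (by norm_num) (by norm_num) (by omega)
      _ = 1/2 := pow_one _
  have hTdisj : Pairwise (Function.onFun Disjoint T) := by
    have key : ∀ a b : ℕ, a < b → Disjoint (T a) (T b) := by
      intro a b hab
      rw [Set.disjoint_left]
      intro x hxa hxb
      have h1 := (hTnorm a x hxa).1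
      have h2 := (hTnorm b x hxb).2
      have : (1/2:ℝ)^(b+1) ≤ (1/2:ℝ)^(a+2) :=
        pow_le_pow_of_le_one (by norm_num) (by norm_num) (by omega)
      linarith
    intro j k hjk
    rcases hjk.lt_or_gt with h | h
    · exact key j k h
    · exact (key k j h).symm
  -- pointwise lower bound on T k
  have hptwise : ∀ k, ∀ x ∈ T k,
      ENNReal.ofReal ((c * (r k) ^ ((1:ℝ) - n)) ^ p) ≤ f x := by
    intro k x hx
    obtain ⟨y, hy, rfl⟩ := hx
    set t := r k with ht
    have htpos : 0 < t := hrpos k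
    apply ENNReal.ofReal_le_ofReal
    have hbase : c * t ^ ((1:ℝ) - n) ≤
        max (-(-(1 / ((n:ℝ) * ωn)) * ‖t • y‖ ^ (-(n:ℝ)) * ⟪d, t • y⟫)) 0 := by
      refine le_trans ?_ (le_max_left _ _)
      have hxnorm : ‖t • y‖ = t * ‖y‖ := by
        rw [norm_smul, Real.norm_eq_abs, abs_of_pos htpos]
      have hxnpos : (0:ℝ) < ‖t • y‖ := by
        rw [hxnorm]; exact mul_pos htpos (by linarith [hy.2.1])
      have hxle : ‖t • y‖ ≤ t := by
        rw [hxnorm]; nlinarith [hy.2.2, htpos]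
      have hB : t ^ (-(n:ℝ)) ≤ ‖t • y‖ ^ (-(n:ℝ)) :=
        Real.rpow_le_rpow_of_nonpos hxnpos hxle (by simp [Nat.cast_nonneg])
      have hinner : t * (‖d‖ / 4) ≤ ⟪d, t • y⟫ := by
        rw [real_inner_smul_right]
        have h1 : ‖d‖ / 4 ≤ ⟪d, y⟫ := by nlinarith [hy.1, hy.2.1, hdpos]
        nlinarith
      have hexpr : -(-(1 / ((n:ℝ) * ωn)) * ‖t • y‖ ^ (-(n:ℝ)) * ⟪d, t • y⟫)
          = (1 / ((n:ℝ) * ωn)) * ‖t • y‖ ^ (-(n:ℝ)) * ⟪d, t • y⟫ := by ring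
      rw [hexpr]
      have hstep : (1 / ((n:ℝ) * ωn)) * (t ^ (-(n:ℝ))) * (t * (‖d‖/4)) ≤
          (1 / ((n:ℝ) * ωn)) * ‖t • y‖ ^ (-(n:ℝ)) * ⟪d, t • y⟫ := by
        have hA : (0:ℝ) < 1 / ((n:ℝ) * ωn) := by positivity
        have htB : (0:ℝ) < t ^ (-(n:ℝ)) := Real.rpow_pos_of_pos htpos _
        have htC : (0:ℝ) < t * (‖d‖/4) := by positivity
        apply mul_le_mul (mul_le_mul_of_nonneg_left hB hA.le) hinner htC.le (by positivity)
      refine le_trans (le_of_eq ?_) hstep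
      rw [hc, show (1:ℝ) - n = -(n:ℝ) + 1 by ring, Real.rpow_add htpos, Real.rpow_one]
      field_simp
    exact Real.rpow_le_rpow (by positivity) hbase hppos.le
  -- measure of T k
  have hTvol : ∀ k, volume (T k) = ENNReal.ofReal ((r k) ^ n) * volume S := by
    intro k
    rw [hT]
    rw [Measure.addHaar_smul_of_nonneg volume (hrpos k).le S, finrank_euclideanSpace_fin]
  -- lower bound of integral over T k
  set ε : ℝ≥0∞ := ENNReal.ofReal (c ^ p) * volume S with hε
  have hTint : ∀ k, ε ≤ ∫⁻ x in T k, f x := by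
    intro k
    have h1 : ENNReal.ofReal ((c * (r k) ^ ((1:ℝ) - n)) ^ p) * volume (T k)
        ≤ ∫⁻ x in T k, f x := by
      rw [← setLIntegral_const (T k) _]
      exact setLIntegral_mono' (hTmeas k) (hptwise k)
    refine le_trans (le_of_eq ?_) h1
    rw [hTvol k, hε, ← mul_assoc]
    congr 1
    rw [← ENNReal.ofReal_mul (by positivity)]
    congr 1
    have htpos : 0 < r k := hrpos k
    rw [Real.mul_rpow hcpos.le (Real.rpow_nonneg htpos.le _),
      ← Real.rpow_natCast (r k) n, ← Real.rpow_mul htpos.le, mul_assoc,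
      ← Real.rpow_add htpos]
    have hexp : ((1:ℝ) - n) * p + n = 0 := by
      have h : (n:ℝ) - 1 ≠ 0 := by linarith
      rw [hp]
      field_simp
      ring
    rw [hexp, Real.rpow_zero, mul_one]
  -- combine
  rw [eq_top_iff]
  calc (⊤:ℝ≥0∞) = ∑' _ : ℕ, ε := by
        rw [ENNReal.tsum_const_eq_top_of_ne_zero]
        exact mul_ne_zero ((ENNReal.ofReal_pos.mpr (by positivity)).ne') hSpos.ne'
    _ ≤ ∑' k, ∫⁻ x in T k, f x := ENNReal.tsum_le_tsum hTint
    _ = ∫⁻ x in ⋃ k, T k, f x := (lintegral_iUnion hTmeas hTdisj _).symm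
    _ ≤ ∫⁻ x in ball (0:EuclideanSpace ℝ (Fin n)) (1/2), f x :=
        lintegral_mono_set (Set.iUnion_subset hTsub)
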